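/- arXiv:1104.2706 — 2 statements merged into one kernel-verified Lean document; each statement's English description precedes it below -/
import Mathlib

section
/- Let n ≥ 2t with t > 1, and let q be a prime power. Then the minimum size τ_q(n+t-1, t) of a maximal partial t-spread of V(n+t-1, q) satisfies τ_q(n+t-1, t) ≥ σ_q(n,t), where σ_q(n,t) is the minimum size of a subspace partition of V(n,q) whose largest member has dimension t, given that every minimum size maximal partial t-spread S of V(n+t-1,q) has the property that ∪_{W∈S} W contains an n-dimensional subspace. -/
open Module

/-- A subspace partition: a collection of nonzero subspaces such that every
nonzero vector lies in exactly one member. -/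
def IsSubspacePartition {F V : Type*} [Field F] [AddCommGroup V] [Module F V]
    (P : Finset (Submodule F V)) : Prop :=
  (∀ W ∈ P, W ≠ ⊥) ∧ ∀ v : V, v ≠ 0 → ∃! W, W ∈ P ∧ v ∈ W

/-- A partial t-spread: a collection of t-dimensional subspaces that pairwise
intersect trivially. -/
def IsPartialSpread {F V : Type*} [Field F] [AddCommGroup V] [Module F V]
    (t : ℕ) (S : Finset (Submodule F V)) : Prop :=
  (∀ W ∈ S, finrank F ↥W = t) ∧ ∀ W ∈ S, ∀ W' ∈ S, W ≠ W' → W ⊓ W' = ⊥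

/-- A maximal partial t-spread: one that cannot be extended by any further
t-dimensional subspace. -/
def IsMaximalPartialSpread {F V : Type*} [Field F] [AddCommGroup V] [Module F V]
    (t : ℕ) (S : Finset (Submodule F V)) : Prop :=
  IsPartialSpread t S ∧
    ∀ U : Submodule F V, finrank F ↥U = t → (∀ W ∈ S, U ⊓ W = ⊥) → U ∈ S

section Helpers
variable {F : Type*} [Field F] [Fintype F]

lemma partition_count {V : Type*} [AddCommGroup V] [Module F V] [FiniteDimensional F V]
    [Fintype V] (B : Submodule F V) (P : Finset (Submodule F V))
    (hsub : ∀ X ∈ P, X ≤ B)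
    (hcov : ∀ v ∈ B, v ≠ (0:V) → ∃ X ∈ P, v ∈ X)
    (huniq : ∀ X ∈ P, ∀ Y ∈ P, ∀ v : V, v ≠ 0 → v ∈ X → v ∈ Y → X = Y) :
    ∑ X ∈ P, (Fintype.card F ^ finrank F ↥X - 1) = Fintype.card F ^ finrank F ↥B - 1 := by
  classical
  have key : ∀ X : Submodule F V,
      (Finset.univ.filter (fun v : V => v ∈ X ∧ v ≠ 0)).card
        = Fintype.card F ^ finrank F ↥X - 1 := by
    intro X
    have h0 : (Finset.univ.filter (fun v : V => v ∈ X ∧ v ≠ 0))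
        = (Finset.univ.filter (fun v : V => v ∈ X)).erase 0 := by
      ext v
      simp only [Finset.mem_filter, Finset.mem_erase, Finset.mem_univ, true_and]
      tauto
    rw [h0, Finset.card_erase_of_mem (by simp [X.zero_mem])]
    have h1 : (Finset.univ.filter (fun v : V => v ∈ X)).card = Fintype.card ↥X :=
      (Fintype.card_subtype _).symm
    rw [h1, card_eq_pow_finrank (K := F)]
  have hdisj : ∀ X ∈ P, ∀ Y ∈ P, X ≠ Y →
      Disjoint (Finset.univ.filter (fun v : V => v ∈ X ∧ v ≠ 0))
        (Finset.univ.filter (fun v : V => v ∈ Y ∧ v ≠ 0)) := by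
    intro X hX Y hY hXY
    rw [Finset.disjoint_left]
    intro v hv hv'
    simp only [Finset.mem_filter, Finset.mem_univ, true_and] at hv hv'
    exact hXY (huniq X hX Y hY v hv.2 hv.1 hv'.1)
  have hunion : P.biUnion (fun X => Finset.univ.filter (fun v : V => v ∈ X ∧ v ≠ 0))
      = Finset.univ.filter (fun v : V => v ∈ B ∧ v ≠ 0) := by
    ext v
    simp only [Finset.mem_biUnion, Finset.mem_filter, Finset.mem_univ, true_and]
    constructor
    · rintro ⟨X, hX, hvX, hv0⟩; exact ⟨hsub X hX hvX, hv0⟩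
    · rintro ⟨hvB, hv0⟩
      obtain ⟨X, hX, hvX⟩ := hcov v hvB hv0
      exact ⟨X, hX, hvX, hv0⟩
  calc ∑ X ∈ P, (Fintype.card F ^ finrank F ↥X - 1)
      = ∑ X ∈ P, (Finset.univ.filter (fun v : V => v ∈ X ∧ v ≠ 0)).card :=
        (Finset.sum_congr rfl fun X _ => (key X).symm)
    _ = (P.biUnion (fun X => Finset.univ.filter (fun v : V => v ∈ X ∧ v ≠ 0))).card :=
        (Finset.card_biUnion hdisj).symm
    _ = (Finset.univ.filter (fun v : V => v ∈ B ∧ v ≠ 0)).card := by rw [hunion]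
    _ = Fintype.card F ^ finrank F ↥B - 1 := key B


lemma transport_partition {V : Type*} [AddCommGroup V] [Module F V] [FiniteDimensional F V]
    {n : ℕ} (B : Submodule F V) (hB : finrank F ↥B = n) (P : Finset (Submodule F V))
    (hsub : ∀ X ∈ P, X ≤ B) (hbot : ∀ X ∈ P, X ≠ ⊥)
    (hcov : ∀ v ∈ B, v ≠ (0:V) → ∃ X ∈ P, v ∈ X)
    (huniq : ∀ X ∈ P, ∀ Y ∈ P, ∀ v : V, v ≠ 0 → v ∈ X → v ∈ Y → X = Y) :
    ∃ Q : Finset (Submodule F (Fin n → F)), IsSubspacePartition Q ∧ Q.card = P.card ∧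
      (∀ Y ∈ Q, ∃ X ∈ P, finrank F ↥Y = finrank F ↥X) ∧
      (∀ X ∈ P, ∃ Y ∈ Q, finrank F ↥Y = finrank F ↥X) := by
  classical
  let e : ↥B ≃ₗ[F] (Fin n → F) := (Module.finBasisOfFinrankEq F ↥B hB).equivFun
  let Φ : Submodule F V → Submodule F (Fin n → F) := fun X =>
    Submodule.map (e : ↥B →ₗ[F] (Fin n → F)) (X.comap B.subtype)
  have hmem : ∀ X : Submodule F V, ∀ u : Fin n → F, u ∈ Φ X ↔ (↑(e.symm u) : V) ∈ X := by
    intro X u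
    constructor
    · rintro ⟨v, hv, rfl⟩
      simpa using hv
    · intro h
      exact ⟨e.symm u, h, by simp⟩
  have hrank : ∀ X ∈ P, finrank F ↥(Φ X) = finrank F ↥X := by
    intro X hX
    rw [LinearEquiv.finrank_map_eq]
    exact (Submodule.comapSubtypeEquivOfLe (hsub X hX)).finrank_eq
  have hinj : Set.InjOn Φ ↑P := by
    intro X hX Y hY h
    have h2 : Submodule.comap B.subtype X = Submodule.comap B.subtype Y := by
      have := congrArg (Submodule.comap (e : ↥B →ₗ[F] (Fin n → F))) h
      have einj : Function.Injective ((e : ↥B →ₗ[F] (Fin n → F)) : ↥B → (Fin n → F)) :=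
        e.injective
      exact (Submodule.comap_map_eq_of_injective einj _).symm.trans
        (this.trans (Submodule.comap_map_eq_of_injective einj _))
    have h3 : B ⊓ X = B ⊓ Y := by
      rw [← Submodule.map_comap_subtype, h2, Submodule.map_comap_subtype]
    rwa [inf_eq_right.mpr (hsub X hX), inf_eq_right.mpr (hsub Y hY)] at h3
  refine ⟨P.image Φ, ⟨?_, ?_⟩, Finset.card_image_of_injOn hinj, ?_, ?_⟩
  · rintro Y hY
    obtain ⟨X, hX, rfl⟩ := Finset.mem_image.mp hY
    intro hbotY
    apply hbot X hX
    have : finrank F ↥(Φ X) = 0 := by rw [hbotY]; exact finrank_bot F _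
    rw [hrank X hX] at this
    exact Submodule.finrank_eq_zero.mp this
  · intro u hu
    have hv0 : (↑((e.symm u)) : V) ≠ 0 := by
      simp only [ne_eq, ZeroMemClass.coe_eq_zero]
      intro h
      apply hu
      have := congrArg e h
      simpa using this
    obtain ⟨X, hX, hvX⟩ := hcov _ (e.symm u).2 hv0
    refine ⟨Φ X, ⟨Finset.mem_image_of_mem Φ hX, (hmem X u).mpr hvX⟩, ?_⟩
    rintro Y ⟨hY, huY⟩
    obtain ⟨X', hX', rfl⟩ := Finset.mem_image.mp hY
    have : (↑(e.symm u) : V) ∈ X' := (hmem X' u).mp huY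
    exact congrArg Φ (huniq X' hX' X hX _ hv0 this hvX)
  · intro Y hY
    obtain ⟨X, hX, rfl⟩ := Finset.mem_image.mp hY
    exact ⟨X, hX, hrank X hX⟩
  · intro X hX
    exact ⟨Φ X, Finset.mem_image_of_mem Φ hX, hrank X hX⟩


set_option maxHeartbeats 1000000 in
lemma construct_partition (K : Type*) [Field K] [Algebra F K] [FiniteDimensional F K]
    {t m : ℕ} (hm : finrank F K = m) (ht : 0 < t) (htm : t ≤ m)
    (W₀ : Submodule F K) (hW₀ : finrank F ↥W₀ = t) :
    ∃ P : Finset (Submodule F (K × ↥W₀)),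
      (∀ X ∈ P, X ≠ ⊥) ∧
      (∀ v : K × ↥W₀, v ≠ 0 → ∃ X ∈ P, v ∈ X) ∧
      (∀ X ∈ P, ∀ Y ∈ P, ∀ v : K × ↥W₀, v ≠ 0 → v ∈ X → v ∈ Y → X = Y) ∧
      (∀ X ∈ P, finrank F ↥X ≤ t) ∧ (∃ X ∈ P, finrank F ↥X = t) ∧
      ∃ ℓ : ℕ, P.card ≤ Fintype.card F ^ m + ℓ ∧
        ℓ * (Fintype.card F - 1) = Fintype.card F ^ m - 1 := by
  classical
  haveI : Finite K := Module.finite_of_finite F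
  haveI : Fintype K := Fintype.ofFinite K
  haveI : Fintype ↥W₀ := Fintype.ofFinite ↥W₀
  -- basic maps
  let inl : K →ₗ[F] K × ↥W₀ := LinearMap.inl F K ↥W₀
  let inr : ↥W₀ →ₗ[F] K × ↥W₀ := LinearMap.inr F K ↥W₀
  let g : K → (↥W₀ →ₗ[F] K × ↥W₀) := fun k =>
    ((LinearMap.mulLeft F k⁻¹).comp W₀.subtype).prod LinearMap.id
  have hg_apply : ∀ k (w : ↥W₀), g k w = (k⁻¹ * (w : K), w) := fun k w => rfl
  let Pinf : Submodule F (K × ↥W₀) := LinearMap.range inr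
  let Pk : K → Submodule F (K × ↥W₀) := fun k => LinearMap.range (g k)
  let L : K → Submodule F (K × ↥W₀) := fun x => Submodule.span F {((x : K), (0 : ↥W₀))}
  -- membership facts
  have hPinf_mem : ∀ v : K × ↥W₀, v ∈ Pinf ↔ v.1 = 0 := by
    intro v
    constructor
    · rintro ⟨w, rfl⟩; rfl
    · intro h; exact ⟨v.2, by rw [show inr v.2 = ((0:K), v.2) from rfl, ← h]⟩
  have hPk_mem : ∀ k : K, ∀ v : K × ↥W₀, v ∈ Pk k ↔ v.1 = k⁻¹ * (v.2 : K) := by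
    intro k v
    constructor
    · rintro ⟨w, rfl⟩; rfl
    · intro h
      exact ⟨v.2, by rw [hg_apply, ← h]⟩
  have hL_mem : ∀ x : K, ∀ v : K × ↥W₀, v ∈ L x ↔ ∃ c : F, v = c • ((x : K), (0 : ↥W₀)) := by
    intro x v
    rw [show L x = Submodule.span F {((x : K), (0 : ↥W₀))} from rfl,
      Submodule.mem_span_singleton]
    constructor
    · rintro ⟨c, rfl⟩; exact ⟨c, rfl⟩
    · rintro ⟨c, rfl⟩; exact ⟨c, rfl⟩
  -- rank facts
  have hPinf_rank : finrank F ↥Pinf = t := by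
    rw [LinearMap.finrank_range_of_inj LinearMap.inr_injective, hW₀]
  have hPk_rank : ∀ k : K, finrank F ↥(Pk k) = t := by
    intro k
    have hinj : Function.Injective (g k) := by
      intro w w' h
      have := congrArg Prod.snd h
      exact this
    rw [LinearMap.finrank_range_of_inj hinj, hW₀]
  have hL_rank : ∀ x : K, x ≠ 0 → finrank F ↥(L x) = 1 := by
    intro x hx
    apply finrank_span_singleton
    simp [Prod.ext_iff, hx]
  -- the finset
  let lines : Finset (Submodule F (K × ↥W₀)) :=
    (Finset.univ.filter (fun x : K => x ≠ 0)).image L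
  let Pks : Finset (Submodule F (K × ↥W₀)) :=
    (Finset.univ.filter (fun k : K => k ≠ 0)).image Pk
  let P : Finset (Submodule F (K × ↥W₀)) := insert Pinf (Pks ∪ lines)
  -- pattern lemmas for uniqueness
  have hL_pat : ∀ x : K, x ≠ 0 → ∀ v : K × ↥W₀, v ≠ 0 → v ∈ L x →
      v.2 = 0 ∧ v.1 ≠ 0 ∧ L x = Submodule.span F {v} := by
    intro x hx v hv hvL
    obtain ⟨c, rfl⟩ := (hL_mem x v).mp hvL
    have hc : c ≠ 0 := by rintro rfl; simp at hv
    refine ⟨by simp, by simp [hc, hx], ?_⟩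
    rw [Submodule.span_singleton_smul_eq (IsUnit.mk0 c hc) _]
  have hPk_pat : ∀ k : K, k ≠ 0 → ∀ v : K × ↥W₀, v ≠ 0 → v ∈ Pk k →
      (v.2 : K) ≠ 0 ∧ v.1 ≠ 0 ∧ k = (v.2 : K) * v.1⁻¹ := by
    intro k hk v hv hvPk
    have h1 := (hPk_mem k v).mp hvPk
    have hw : (v.2 : K) ≠ 0 := by
      intro h
      apply hv
      have h2 : v.2 = 0 := by exact_mod_cast Submodule.coe_eq_zero.mp h
      have : v.1 = 0 := by rw [h1, h, mul_zero]
      exact Prod.ext this h2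
    have ha : v.1 ≠ 0 := by
      rw [h1]
      exact mul_ne_zero (inv_ne_zero hk) hw
    refine ⟨hw, ha, ?_⟩
    field_simp [h1]
    rw [h1, ← mul_assoc, mul_inv_cancel₀ hk, one_mul]
  -- assemble
  refine ⟨P, ?_, ?_, ?_, ?_, ?_, ?_⟩
  · -- no bottom
    intro X hX
    have : 0 < finrank F ↥X := by
      rcases Finset.mem_insert.mp hX with rfl | hX'
      · rw [hPinf_rank]; exact ht
      rcases Finset.mem_union.mp hX' with hX'' | hX''
      · obtain ⟨k, hk, rfl⟩ := Finset.mem_image.mp hX''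
        rw [hPk_rank]; exact ht
      · obtain ⟨x, hx, rfl⟩ := Finset.mem_image.mp hX''
        rw [hL_rank x (by simpa using (Finset.mem_filter.mp hx).2)]; norm_num
    intro hbot
    rw [hbot, finrank_bot] at this
    exact Nat.lt_irrefl 0 this
  · -- cover
    intro v hv
    by_cases hw : v.2 = 0
    · have ha : v.1 ≠ 0 := fun h => hv (Prod.ext h hw)
      refine ⟨L v.1, ?_, ?_⟩
      · exact Finset.mem_insert_of_mem (Finset.mem_union_right _
          (Finset.mem_image_of_mem L (Finset.mem_filter.mpr ⟨Finset.mem_univ _, ha⟩)))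
      · rw [hL_mem]
        exact ⟨1, by simp [Prod.ext_iff, hw]⟩
    · by_cases ha : v.1 = 0
      · exact ⟨Pinf, Finset.mem_insert_self _ _, (hPinf_mem v).mpr ha⟩
      · have hwK : (v.2 : K) ≠ 0 := fun h => hw (Submodule.coe_eq_zero.mp h)
        refine ⟨Pk ((v.2 : K) * v.1⁻¹), ?_, ?_⟩
        · exact Finset.mem_insert_of_mem (Finset.mem_union_left _
            (Finset.mem_image_of_mem Pk (Finset.mem_filter.mpr ⟨Finset.mem_univ _,
              mul_ne_zero hwK (inv_ne_zero ha)⟩)))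
        · rw [hPk_mem]
          field_simp
  · -- uniqueness
    have main : ∀ X ∈ P, ∀ v : K × ↥W₀, v ≠ 0 → v ∈ X →
        (X = Pinf ∧ v.1 = 0 ∧ v.2 ≠ 0) ∨
        (∃ k : K, k ≠ 0 ∧ X = Pk k ∧ v.1 ≠ 0 ∧ (v.2:K) ≠ 0 ∧ k = (v.2 : K) * v.1⁻¹) ∨
        (X = Submodule.span F {v} ∧ v.2 = 0 ∧ v.1 ≠ 0) := by
      intro X hX v hv hvX
      rcases Finset.mem_insert.mp hX with rfl | hX'
      · left
        have h1 := (hPinf_mem v).mp hvX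
        exact ⟨rfl, h1, fun h => hv (Prod.ext h1 h)⟩
      rcases Finset.mem_union.mp hX' with hX'' | hX''
      · obtain ⟨k, hk, rfl⟩ := Finset.mem_image.mp hX''
        have hk0 : k ≠ 0 := by simpa using (Finset.mem_filter.mp hk).2
        obtain ⟨hw, ha, hkk⟩ := hPk_pat k hk0 v hv hvX
        right; left
        exact ⟨k, hk0, rfl, ha, hw, hkk⟩
      · obtain ⟨x, hx, rfl⟩ := Finset.mem_image.mp hX''
        have hx0 : x ≠ 0 := by simpa using (Finset.mem_filter.mp hx).2
        obtain ⟨hw, ha, hsp⟩ := hL_pat x hx0 v hv hvX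
        right; right
        exact ⟨hsp, hw, ha⟩
    intro X hX Y hY v hv hvX hvY
    rcases main X hX v hv hvX with ⟨hX1, hp1, hp2⟩ | ⟨k, hk0, hX1, hp1, hp2, hk⟩ | ⟨hX1, hp1, hp2⟩ <;>
      rcases main Y hY v hv hvY with ⟨hY1, hq1, hq2⟩ | ⟨k', hk0', hY1, hq1, hq2, hk'⟩ | ⟨hY1, hq1, hq2⟩
    · rw [hX1, hY1]
    · exact absurd hp1 hq1
    · exact absurd hq1 hp2
    · exact absurd hq1 hp1
    · rw [hX1, hY1, hk, hk']
    · exact absurd (Submodule.coe_eq_zero.mpr hq1) hp2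
    · exact absurd hq1 hp2
    · exact absurd (Submodule.coe_eq_zero.mpr hp1) hq2
    · rw [hX1, hY1]
  · -- ranks ≤ t
    intro X hX
    rcases Finset.mem_insert.mp hX with rfl | hX'
    · rw [hPinf_rank]
    rcases Finset.mem_union.mp hX' with hX'' | hX''
    · obtain ⟨k, hk, rfl⟩ := Finset.mem_image.mp hX''
      rw [hPk_rank]
    · obtain ⟨x, hx, rfl⟩ := Finset.mem_image.mp hX''
      rw [hL_rank x (by simpa using (Finset.mem_filter.mp hx).2)]
      exact ht
  · -- witness
    exact ⟨Pinf, Finset.mem_insert_self _ _, hPinf_rank⟩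
  · -- cardinality
    refine ⟨lines.card, ?_, ?_⟩
    · have h1 : P.card ≤ 1 + (Pks ∪ lines).card := by
        have h0 := Finset.card_insert_le Pinf (Pks ∪ lines)
        have hPdef : P.card = (insert Pinf (Pks ∪ lines)).card := rfl
        omega
      have h2 : (Pks ∪ lines).card ≤ Pks.card + lines.card := Finset.card_union_le _ _
      have h3 : Pks.card ≤ Fintype.card F ^ m - 1 := by
        calc Pks.card ≤ (Finset.univ.filter (fun k : K => k ≠ 0)).card :=
              Finset.card_image_le
          _ = Fintype.card K - 1 := by
              rw [Finset.filter_ne' Finset.univ (0:K), Finset.card_erase_of_mem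
                (Finset.mem_univ _), Finset.card_univ]
          _ = Fintype.card F ^ m - 1 := by
              rw [card_eq_pow_finrank (K := F) (V := K), hm]
      have hq : 0 < Fintype.card F ^ m := pow_pos Fintype.card_pos m
      omega
    · -- lines count
      have hBrank : finrank F ↥(LinearMap.range inl) = m := by
        rw [LinearMap.finrank_range_of_inj LinearMap.inl_injective, hm]
      have hsub' : ∀ X ∈ lines, X ≤ LinearMap.range inl := by
        intro X hX
        obtain ⟨x, hx, rfl⟩ := Finset.mem_image.mp hX
        rw [show L x = Submodule.span F {((x:K),(0:↥W₀))} from rfl, Submodule.span_le]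
        rintro v rfl
        exact ⟨x, rfl⟩
      have hcov' : ∀ v ∈ LinearMap.range inl, v ≠ (0 : K × ↥W₀) → ∃ X ∈ lines, v ∈ X := by
        rintro v ⟨a, rfl⟩ hv
        have ha : a ≠ 0 := by rintro rfl; exact hv rfl
        refine ⟨L a, Finset.mem_image_of_mem L (Finset.mem_filter.mpr ⟨Finset.mem_univ _, ha⟩), ?_⟩
        rw [hL_mem]
        exact ⟨1, by rw [one_smul]; simp [inl]⟩
      have huniq' : ∀ X ∈ lines, ∀ Y ∈ lines, ∀ v : K × ↥W₀, v ≠ 0 → v ∈ X → v ∈ Y → X = Y := by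
        intro X hX Y hY v hv hvX hvY
        obtain ⟨x, hx, rfl⟩ := Finset.mem_image.mp hX
        obtain ⟨y, hy, rfl⟩ := Finset.mem_image.mp hY
        have hx0 : x ≠ 0 := by simpa using (Finset.mem_filter.mp hx).2
        have hy0 : y ≠ 0 := by simpa using (Finset.mem_filter.mp hy).2
        rw [(hL_pat x hx0 v hv hvX).2.2, (hL_pat y hy0 v hv hvY).2.2]
      have hsum := partition_count (LinearMap.range inl) lines hsub' hcov' huniq'
      rw [hBrank] at hsum
      have hconst : ∀ X ∈ lines, Fintype.card F ^ finrank F ↥X - 1 = Fintype.card F - 1 := by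
        intro X hX
        obtain ⟨x, hx, rfl⟩ := Finset.mem_image.mp hX
        rw [hL_rank x (by simpa using (Finset.mem_filter.mp hx).2), pow_one]
      rw [Finset.sum_congr rfl hconst, Finset.sum_const, smul_eq_mul] at hsum
      exact hsum


end Helpers

open Polynomial in
lemma exists_field_ext (F : Type*) [Field F] [Fintype F] (m : ℕ) (hm : m ≠ 0) :
    ∃ (p nn : ℕ) (_ : Fact p.Prime) (_ : F →+* GaloisField p nn),
      Nat.card (GaloisField p nn) = Fintype.card F ^ m := by
  obtain ⟨p, hchar⟩ := CharP.exists F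
  haveI : CharP F p := hchar
  obtain ⟨e, hp, hcard⟩ := FiniteField.card F p
  haveI : Fact p.Prime := ⟨hp⟩
  set e' := (e : ℕ) with he'def
  have he' : e' ≠ 0 := e.ne_zero
  have hem : e' * m ≠ 0 := mul_ne_zero he' hm
  -- divisibility of the defining polynomials
  have hdvd : (X ^ p ^ e' - X : (ZMod p)[X]) ∣ (X ^ p ^ (e' * m) - X : (ZMod p)[X]) := by
    obtain ⟨c, hc⟩ : p ^ e' - 1 ∣ p ^ (e' * m) - 1 := by
      have h := Nat.sub_dvd_pow_sub_pow (p ^ e') 1 m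
      rw [one_pow, ← pow_mul] at h
      exact h
    have key : ∀ k : ℕ, (X : (ZMod p)[X]) ^ (k + 1) - X = X * (X ^ k - 1) := by
      intro k; ring
    have hpe : p ^ e' = (p ^ e' - 1) + 1 := (Nat.succ_pred_eq_of_pos (pow_pos hp.pos _)).symm
    have hpem : p ^ (e' * m) = (p ^ (e' * m) - 1) + 1 :=
      (Nat.succ_pred_eq_of_pos (pow_pos hp.pos _)).symm
    rw [hpe, hpem, key, key]
    apply mul_dvd_mul_left
    have h2 : (X : (ZMod p)[X]) ^ (p ^ e' - 1) - 1 ∣ ((X : (ZMod p)[X]) ^ (p ^ e' - 1)) ^ c - 1 := by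
      simpa using sub_dvd_pow_sub_pow ((X : (ZMod p)[X]) ^ (p ^ e' - 1)) 1 c
    rwa [← pow_mul, ← hc] at h2
  have hbig_ne : (X ^ p ^ (e' * m) - X : (ZMod p)[X]) ≠ 0 :=
    FiniteField.X_pow_card_pow_sub_X_ne_zero _ hem hp.one_lt
  haveI : IsSplittingField (ZMod p) (GaloisField p (e' * m)) (X ^ p ^ (e' * m) - X : (ZMod p)[X]) :=
    inferInstanceAs (IsSplittingField (ZMod p) (SplittingField (X ^ p ^ (e' * m) - X : (ZMod p)[X])) _)
  haveI : IsSplittingField (ZMod p) (GaloisField p e') (X ^ p ^ e' - X : (ZMod p)[X]) :=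
    inferInstanceAs (IsSplittingField (ZMod p) (SplittingField (X ^ p ^ e' - X : (ZMod p)[X])) _)
  have hbig_splits : Splits ((X ^ p ^ (e' * m) - X : (ZMod p)[X]).map
      (algebraMap (ZMod p) (GaloisField p (e' * m)))) := IsSplittingField.splits _ _
  have hsplits : Splits ((X ^ p ^ e' - X : (ZMod p)[X]).map
      (algebraMap (ZMod p) (GaloisField p (e' * m)))) :=
    Splits.of_dvd hbig_splits (Polynomial.map_ne_zero hbig_ne) (Polynomial.map_dvd _ hdvd)
  letI : Algebra (ZMod p) F := ZMod.algebra F p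
  have hNat : Nat.card F = p ^ e' := by rw [Nat.card_eq_fintype_card, hcard]
  let eqv : F ≃ₐ[ZMod p] GaloisField p e' := GaloisField.algEquivGaloisField p e' hNat
  let lift : GaloisField p e' →ₐ[ZMod p] GaloisField p (e' * m) :=
    IsSplittingField.lift (GaloisField p e') (X ^ p ^ e' - X : (ZMod p)[X]) hsplits
  refine ⟨p, e' * m, inferInstance, (lift.comp eqv.toAlgHom).toRingHom, ?_⟩
  rw [GaloisField.card p (e' * m) hem, pow_mul, ← hcard]


set_option maxHeartbeats 2000000 in
theorem tau_ge_sigma {F : Type*} [Field F] [Fintype F]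
    (q n t : ℕ) (hq : Fintype.card F = q) (ht : 1 < t) (hn : 2 * t ≤ n)
    (τ σ : ℕ)
    (hτ : IsLeast {m : ℕ | ∃ S : Finset (Submodule F (Fin (n + t - 1) → F)),
      IsMaximalPartialSpread t S ∧ S.card = m} τ)
    (hσ : IsLeast {m : ℕ | ∃ P : Finset (Submodule F (Fin n → F)),
      IsSubspacePartition P ∧ (∀ W ∈ P, finrank F ↥W ≤ t) ∧
      (∃ W ∈ P, finrank F ↥W = t) ∧ P.card = m} σ)
    (hGov : ∀ S : Finset (Submodule F (Fin (n + t - 1) → F)),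
      IsMaximalPartialSpread t S → S.card = τ →
        ∃ B : Submodule F (Fin (n + t - 1) → F), finrank F ↥B = n ∧
          (B : Set (Fin (n + t - 1) → F)) ⊆
            ⋃ W ∈ (S : Set (Submodule F (Fin (n + t - 1) → F))),
              (W : Set (Fin (n + t - 1) → F))) :
    σ ≤ τ := by
  classical
  obtain ⟨⟨S, hSmax, hScard⟩, hτ_lb⟩ := hτ
  obtain ⟨hσ_mem, hσ_lb⟩ := hσ
  obtain ⟨B, hBrank, hBsub⟩ := hGov S hSmax hScard
  have hq2 : 2 ≤ Fintype.card F := Fintype.one_lt_card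
  have hVrank : finrank F (Fin (n + t - 1) → F) = n + t - 1 := by simp
  -- the induced partition of B
  have hrank_inf : ∀ W ∈ S, 1 ≤ finrank F ↥(W ⊓ B) ∧ finrank F ↥(W ⊓ B) ≤ t := by
    intro W hW
    have h1 := Submodule.finrank_sup_add_finrank_inf_eq W B
    have h2 : finrank F ↥(W ⊔ B) ≤ n + t - 1 := by
      have := Submodule.finrank_le (W ⊔ B)
      rwa [hVrank] at this
    have h3 : finrank F ↥W = t := hSmax.1.1 W hW
    have h4 : finrank F ↥(W ⊓ B) ≤ finrank F ↥W := Submodule.finrank_mono inf_le_left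
    omega
  set P₁ : Finset (Submodule F (Fin (n + t - 1) → F)) := S.image (fun W => W ⊓ B) with hP₁def
  have hrank₁ : ∀ X ∈ P₁, 1 ≤ finrank F ↥X ∧ finrank F ↥X ≤ t := by
    intro X hX
    obtain ⟨W, hW, rfl⟩ := Finset.mem_image.mp hX
    exact hrank_inf W hW
  have hsub₁ : ∀ X ∈ P₁, X ≤ B := by
    intro X hX
    obtain ⟨W, hW, rfl⟩ := Finset.mem_image.mp hX
    exact inf_le_right
  have hbot₁ : ∀ X ∈ P₁, X ≠ ⊥ := by
    intro X hX hb
    have := (hrank₁ X hX).1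
    rw [hb, finrank_bot] at this
    omega
  have hcov₁ : ∀ v ∈ B, v ≠ (0 : Fin (n + t - 1) → F) → ∃ X ∈ P₁, v ∈ X := by
    intro v hv hv0
    have hmem := hBsub hv
    rw [Set.mem_iUnion₂] at hmem
    obtain ⟨W, hW, hvW⟩ := hmem
    exact ⟨W ⊓ B, Finset.mem_image_of_mem _ hW, hvW, hv⟩
  have huniq₁ : ∀ X ∈ P₁, ∀ Y ∈ P₁, ∀ v : Fin (n + t - 1) → F,
      v ≠ 0 → v ∈ X → v ∈ Y → X = Y := by
    intro X hX Y hY v hv hvX hvY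
    obtain ⟨W, hW, rfl⟩ := Finset.mem_image.mp hX
    obtain ⟨W', hW', rfl⟩ := Finset.mem_image.mp hY
    by_cases hWW : W = W'
    · rw [hWW]
    · exfalso
      have hdis := hSmax.1.2 W hW W' hW' hWW
      have : v ∈ W ⊓ W' := ⟨hvX.1, hvY.1⟩
      rw [hdis] at this
      exact hv this
  have hinj₁ : Set.InjOn (fun W => W ⊓ B) ↑S := by
    intro W hW W' hW' h
    by_contra hWW
    have hdis := hSmax.1.2 W hW W' hW' hWW
    have hne : W ⊓ B ≠ ⊥ := hbot₁ _ (Finset.mem_image_of_mem _ hW)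
    obtain ⟨v, hv, hv0⟩ := Submodule.ne_bot_iff _ |>.mp hne
    have heq : W ⊓ B = W' ⊓ B := h
    have hv' : v ∈ W' ⊓ B := heq ▸ hv
    have : v ∈ W ⊓ W' := ⟨hv.1, hv'.1⟩
    rw [hdis] at this
    exact hv0 this
  have hcard₁ : P₁.card = τ := by rw [hP₁def, Finset.card_image_of_injOn hinj₁, hScard]
  by_cases hex : ∃ X ∈ P₁, finrank F ↥X = t
  · -- good case : transport the partition
    obtain ⟨Q, hQpart, hQcard, hQ1, hQ2⟩ :=
      transport_partition B hBrank P₁ hsub₁ hbot₁ hcov₁ huniq₁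
    have hQmem : Q.card ∈ {m : ℕ | ∃ P : Finset (Submodule F (Fin n → F)),
        IsSubspacePartition P ∧ (∀ W ∈ P, finrank F ↥W ≤ t) ∧
        (∃ W ∈ P, finrank F ↥W = t) ∧ P.card = m} := by
      refine ⟨Q, hQpart, ?_, ?_, rfl⟩
      · intro Y hY
        obtain ⟨X, hX, hYX⟩ := hQ1 Y hY
        rw [hYX]
        exact (hrank₁ X hX).2
      · obtain ⟨X₀, hX₀, hX₀t⟩ := hex
        obtain ⟨Y, hY, hYX⟩ := hQ2 X₀ hX₀
        exact ⟨Y, hY, by rw [hYX, hX₀t]⟩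
    calc σ ≤ Q.card := hσ_lb hQmem
      _ = τ := hQcard.trans hcard₁
  · -- bad case : all pieces have dimension < t
    push_neg at hex
    have hall : ∀ X ∈ P₁, finrank F ↥X ≤ t - 1 := by
      intro X hX
      have h1 := (hrank₁ X hX).2
      have h2 := hex X hX
      omega
    have hcount := partition_count B P₁ hsub₁ hcov₁ huniq₁
    rw [hBrank] at hcount
    have hτbound : Fintype.card F ^ n - 1 ≤ τ * (Fintype.card F ^ (t - 1) - 1) := by
      calc Fintype.card F ^ n - 1
          = ∑ X ∈ P₁, (Fintype.card F ^ finrank F ↥X - 1) := hcount.symm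
        _ ≤ ∑ _X ∈ P₁, (Fintype.card F ^ (t - 1) - 1) := by
            refine Finset.sum_le_sum fun X hX => ?_
            have h5 := hall X hX
            have h6 := Nat.pow_le_pow_right (le_trans one_le_two hq2) h5
            omega
        _ = P₁.card * (Fintype.card F ^ (t - 1) - 1) := by
            rw [Finset.sum_const, smul_eq_mul]
        _ = τ * (Fintype.card F ^ (t - 1) - 1) := by rw [hcard₁]
    -- build the auxiliary partition from a field extension of degree n - t
    have hm0 : n - t ≠ 0 := by omega
    obtain ⟨p, nn, hfp, f, hKcard⟩ := exists_field_ext F (n - t) hm0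
    haveI := hfp
    letI : Algebra F (GaloisField p nn) := f.toAlgebra
    haveI : Module.Finite F (GaloisField p nn) := Module.Finite.of_finite
    haveI : Fintype (GaloisField p nn) := Fintype.ofFinite _
    have hKrank : finrank F (GaloisField p nn) = n - t := by
      have h1 : Fintype.card (GaloisField p nn)
          = Fintype.card F ^ finrank F (GaloisField p nn) := card_eq_pow_finrank
      have h2 : Fintype.card (GaloisField p nn) = Fintype.card F ^ (n - t) := by
        rw [← Nat.card_eq_fintype_card, hKcard]
      exact Nat.pow_right_injective hq2 (h1.symm.trans h2)
    have htm : t ≤ n - t := by omega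
    let b := Module.finBasisOfFinrankEq F (GaloisField p nn) hKrank
    have hli : LinearIndependent F (b ∘ Fin.castLE htm) :=
      b.linearIndependent.comp _ (Fin.castLE_injective htm)
    set W₀ : Submodule F (GaloisField p nn) :=
      Submodule.span F (Set.range (b ∘ Fin.castLE htm)) with hW₀def
    have hW₀ : finrank F ↥W₀ = t := by
      rw [hW₀def, finrank_span_eq_card hli, Fintype.card_fin]
    obtain ⟨P₂, hbot₂, hcov₂, huniq₂, hle₂, hwit₂, ℓ, hcard₂, hlines₂⟩ :=
      construct_partition (GaloisField p nn) hKrank (by omega) htm W₀ hW₀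
    have htop : finrank F ↥(⊤ : Submodule F (GaloisField p nn × ↥W₀)) = n := by
      rw [finrank_top, Module.finrank_prod, hKrank, hW₀]
      omega
    obtain ⟨Q, hQpart, hQcard, hQ1, hQ2⟩ :=
      transport_partition (⊤ : Submodule F (GaloisField p nn × ↥W₀)) htop P₂
        (fun X _ => le_top) hbot₂ (fun v _ hv0 => hcov₂ v hv0) huniq₂
    have hσle : σ ≤ Q.card := by
      refine hσ_lb ⟨Q, hQpart, ?_, ?_, rfl⟩
      · intro Y hY
        obtain ⟨X, hX, hYX⟩ := hQ1 Y hY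
        rw [hYX]
        exact hle₂ X hX
      · obtain ⟨X₀, hX₀, hX₀t⟩ := hwit₂
        obtain ⟨Y, hY, hYX⟩ := hQ2 X₀ hX₀
        exact ⟨Y, hY, by rw [hYX, hX₀t]⟩
    -- final arithmetic : P₂.card ≤ τ
    set q' := Fintype.card F with hq'def
    set a := q' ^ (n - t) with hadef
    set bb := q' ^ (t - 1) with hbbdef
    have ha2 : 2 ≤ a := le_trans hq2 (Nat.le_self_pow hm0 q')
    have hbb2 : 2 ≤ bb := le_trans hq2 (Nat.le_self_pow (by omega) q')
    have hqn : q' ^ n = a * bb * q' := by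
      rw [hadef, hbbdef, ← pow_add, ← pow_succ]
      congr 1
      omega
    have hℓ : ℓ ≤ a - 1 := by
      have h7 : ℓ * 1 ≤ ℓ * (q' - 1) := Nat.mul_le_mul_left ℓ (by omega)
      omega
    have harith : (a + ℓ) * (bb - 1) + 1 ≤ q' ^ n := by
      obtain ⟨b1, hb1⟩ : ∃ b1, bb = b1 + 1 := ⟨bb - 1, by omega⟩
      have e1 : (a + ℓ) * (bb - 1) ≤ (a + a) * b1 := by
        rw [hb1, Nat.add_sub_cancel]
        exact Nat.mul_le_mul_right _ (by omega)
      have e2 : (a + a) * b1 + 2 * a = 2 * (a * bb) := by rw [hb1]; ring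
      have e3 : 2 * (a * bb) ≤ q' * (a * bb) := Nat.mul_le_mul_right _ hq2
      have e4 : q' * (a * bb) = q' ^ n := by rw [hqn]; ring
      omega
    have hP₂le : P₂.card ≤ τ := by
      have hpos : 0 < bb - 1 := by omega
      have h10 : P₂.card * (bb - 1) ≤ (a + ℓ) * (bb - 1) :=
        Nat.mul_le_mul_right _ hcard₂
      have h11 : P₂.card * (bb - 1) ≤ τ * (bb - 1) := by omega
      exact Nat.le_of_mul_le_mul_right h11 hpos
    calc σ ≤ Q.card := hσle
      _ = P₂.card := hQcard
      _ ≤ τ := hP₂le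
end

section
/- Let n = kt + r with k ≥ 2, 1 ≤ r < t, ℓ = q^r·Σ_{i=0}^{k-2} q^{it}, and let Π be a subspace partition of V(n,q) with m_t members of dimension t, every member of dimension ≤ t, such that every hyperplane of V contains at most ℓ members of Π of dimension t. Then m_t ≤ ℓ·q^t, i.e., m_t·θ_{n-t} ≤ ℓ·θ_n implies m_t < ℓ·q^t + 1, where θ_i = (q^i-1)/(q-1). -/
open Module

/-- ℓ = q^r · Σ_{i=0}^{k-2} q^{it}. -/
def ell (q k t r : ℕ) : ℕ := q ^ r * ∑ i ∈ Finset.range (k - 1), q ^ (i * t)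

section Aux
open Finset Module


def theta (q m : ℕ) : ℕ := ∑ i ∈ Finset.range m, q ^ i

lemma theta_succ (q m : ℕ) : theta q (m + 1) = theta q m + q ^ m :=
  Finset.sum_range_succ _ _

lemma theta_add (q a b : ℕ) : theta q (a + b) = theta q a + q ^ a * theta q b := by
  induction b with
  | zero => simp [theta]
  | succ b ih =>
    rw [← Nat.add_assoc, theta_succ, ih, theta_succ, pow_add]
    ring

lemma theta_mul_pred (q m : ℕ) (hq : 1 ≤ q) : theta q m * (q - 1) = q ^ m - 1 := by
  induction m with
  | zero => simp [theta]
  | succ m ih =>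
    have hqm : 1 ≤ q ^ m := Nat.one_le_pow _ _ hq
    rw [theta_succ, add_mul, ih, pow_succ, Nat.mul_sub_one]
    have h2 : q ^ m ≤ q ^ m * q := Nat.le_mul_of_pos_right _ hq
    omega

lemma sum_mul_theta (q t a : ℕ) :
    (∑ i ∈ Finset.range a, q ^ (i * t)) * theta q t = theta q (a * t) := by
  induction a with
  | zero => simp [theta]
  | succ a ih =>
    rw [Finset.sum_range_succ, add_mul, ih, Nat.succ_mul, theta_add, pow_mul]

lemma theta_pos (q m : ℕ) (hq : 1 ≤ q) (hm : 1 ≤ m) : 0 < theta q m := by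
  calc 0 < q ^ 0 := Nat.one_le_pow _ _ hq
  _ ≤ theta q m := Finset.single_le_sum (f := fun i => q ^ i) (by intros; positivity)
      (Finset.mem_range.mpr hm)


lemma dual_eq_smul_of_ker_eq {F V : Type*} [Field F] [AddCommGroup V] [Module F V]
    {f g : Module.Dual F V} (hf : f ≠ 0) (hg : g ≠ 0)
    (h : LinearMap.ker f = LinearMap.ker g) :
    ∃ c : F, c ≠ 0 ∧ g = c • f := by
  obtain ⟨x, hx⟩ : ∃ x, f x ≠ 0 := by
    by_contra hc
    push_neg at hc
    exact hf (LinearMap.ext fun v => by simp [hc v])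
  have hgx : g x ≠ 0 := by
    intro hgx
    have hxg : x ∈ LinearMap.ker g := LinearMap.mem_ker.mpr hgx
    rw [← h] at hxg
    exact hx (LinearMap.mem_ker.mp hxg)
  refine ⟨g x / f x, div_ne_zero hgx hx, LinearMap.ext fun v => ?_⟩
  have hker : v - (f v / f x) • x ∈ LinearMap.ker f := by
    simp [LinearMap.mem_ker, map_sub, map_smul, div_mul_cancel₀ _ hx]
  rw [h] at hker
  have h0 : g v - (f v / f x) * g x = 0 := by simpa [map_sub, map_smul] using hker
  have hv : g v = f v / f x * g x := sub_eq_zero.mp h0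
  simp only [LinearMap.smul_apply, smul_eq_mul]
  rw [hv]; ring

open scoped Classical in
lemma card_hyperplanes_containing {F V : Type*} [Field F] [Fintype F]
    [AddCommGroup V] [Module F V] [Fintype V]
    (q : ℕ) (hq : Fintype.card F = q) (hV : 1 ≤ finrank F V) (W : Submodule F V) :
    (Finset.univ.filter fun H : Submodule F V =>
      finrank F H = finrank F V - 1 ∧ W ≤ H).card
      = theta q (finrank F V - finrank F W) := by
  haveI : FiniteDimensional F V := (Module.Basis.ofVectorSpace F V).finiteDimensional_of_finite
  haveI : Finite (Module.Dual F V) :=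
    Finite.of_injective (fun f => (f : V → F)) DFunLike.coe_injective
  haveI : Finite (Submodule F V) :=
    Finite.of_injective (fun U => (U : Set V)) SetLike.coe_injective
  haveI : Fintype (Module.Dual F V) :=
    Fintype.ofFinite _
  haveI : Fintype (Submodule F V) :=
    Fintype.ofFinite _
  set n := finrank F V with hn
  set d := finrank F W with hd
  have hq2 : 2 ≤ q := by
    rw [← hq]; exact Fintype.one_lt_card
  -- the set of nonzero functionals vanishing on W
  set A : Finset (Module.Dual F V) :=
    Finset.univ.filter (fun f => f ≠ 0 ∧ W ≤ LinearMap.ker f) with hA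
  -- cardinality of A
  have hWle : W ≤ ⊤ := le_top
  have hdn : d ≤ n := Submodule.finrank_le W
  have cardA : A.card = q ^ (n - d) - 1 := by
    have hmem : ∀ f : Module.Dual F V,
        (f ∈ W.dualAnnihilator) ↔ W ≤ LinearMap.ker f := by
      intro f
      rw [Submodule.mem_dualAnnihilator]
      constructor
      · intro hf w hw; exact LinearMap.mem_ker.mpr (hf w hw)
      · intro hf w hw; exact LinearMap.mem_ker.mp (hf hw)
    have : A = ((W.dualAnnihilator : Set (Module.Dual F V)).toFinset).erase 0 := by
      ext f
      simp [hA, Finset.mem_erase, hmem, and_comm]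
    rw [this, Finset.card_erase_of_mem (by simp)]
    have hcard : Fintype.card W.dualAnnihilator = q ^ (n - d) := by
      rw [card_eq_pow_finrank (K := F) (V := W.dualAnnihilator), hq]
      congr 1
      have e := Subspace.quotEquivAnnihilator W
      have h1 : finrank F (V ⧸ W) = finrank F W.dualAnnihilator := e.finrank_eq
      have h2 := W.finrank_quotient_add_finrank
      omega
    rw [Set.toFinset_card]
    simp only [SetLike.coe_sort_coe]
    rw [hcard]
  -- target finset
  set Hs : Finset (Submodule F V) :=
    Finset.univ.filter (fun H : Submodule F V => finrank F H = n - 1 ∧ W ≤ H) with hHs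
  -- each f ∈ A has ker f ∈ Hs
  have hker_mem : ∀ f ∈ A, LinearMap.ker f ∈ Hs := by
    intro f hf
    rw [hA, Finset.mem_filter] at hf
    obtain ⟨-, hf0, hfW⟩ := hf
    rw [hHs, Finset.mem_filter]
    refine ⟨Finset.mem_univ _, ?_, hfW⟩
    have hrange : LinearMap.range f = ⊤ := by
      obtain ⟨x, hx⟩ : ∃ x, f x ≠ 0 := by
        by_contra hc
        push_neg at hc
        exact hf0 (LinearMap.ext fun v => by simp [hc v])
      rw [eq_top_iff]
      intro c _
      exact ⟨(c * (f x)⁻¹) • x, by simp [mul_assoc, inv_mul_cancel₀ hx]⟩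
    have := LinearMap.finrank_range_add_finrank_ker f
    rw [hrange, finrank_top, finrank_self] at this
    omega
  -- fiber count
  have fiber_card : ∀ H ∈ Hs, (A.filter (fun f => LinearMap.ker f = H)).card = q - 1 := by
    intro H hH
    rw [hHs, Finset.mem_filter] at hH
    obtain ⟨-, hHr, hHW⟩ := hH
    -- construct a functional with kernel H
    have hq1 : finrank F (V ⧸ H) = 1 := by
      have h2 := H.finrank_quotient_add_finrank
      omega
    obtain ⟨e⟩ : Nonempty ((V ⧸ H) ≃ₗ[F] F) :=
      FiniteDimensional.nonempty_linearEquiv_of_finrank_eq (by rw [hq1, finrank_self])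
    set f₀ : Module.Dual F V := e.toLinearMap ∘ₗ H.mkQ with hf₀
    have hkerf₀ : LinearMap.ker f₀ = H := by
      rw [hf₀, LinearMap.ker_comp, LinearEquiv.ker, Submodule.comap_bot, Submodule.ker_mkQ]
    have hf₀0 : f₀ ≠ 0 := by
      intro h0
      have hT : H = ⊤ := by rw [← hkerf₀, h0]; exact LinearMap.ker_zero
      rw [hT, finrank_top, ← hn] at hHr
      omega
    have hf₀A : f₀ ∈ A := by
      rw [hA, Finset.mem_filter]
      exact ⟨Finset.mem_univ _, hf₀0, hkerf₀ ▸ hHW⟩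
    have himg : A.filter (fun f => LinearMap.ker f = H)
        = (Finset.univ.filter (fun c : F => c ≠ 0)).image (fun c => c • f₀) := by
      ext g
      simp only [Finset.mem_filter, Finset.mem_image, Finset.mem_univ, true_and, hA]
      constructor
      · rintro ⟨⟨hg0, -⟩, hgker⟩
        obtain ⟨c, hc0, hc⟩ := dual_eq_smul_of_ker_eq hf₀0 hg0 (by rw [hkerf₀, hgker])
        exact ⟨c, hc0, hc.symm⟩
      · rintro ⟨c, hc0, rfl⟩
        have hker : LinearMap.ker (c • f₀) = H := by
          rw [LinearMap.ker_smul _ _ hc0, hkerf₀]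
        exact ⟨⟨smul_ne_zero hc0 hf₀0, hker ▸ hHW⟩, hker⟩
    rw [himg, Finset.card_image_of_injective _ (smul_left_injective F hf₀0),
      Finset.filter_ne', Finset.card_erase_of_mem (Finset.mem_univ _), Finset.card_univ, hq]
  -- put everything together
  have hsum := Finset.card_eq_sum_card_fiberwise hker_mem
  rw [Finset.sum_congr rfl fiber_card, Finset.sum_const, smul_eq_mul] at hsum
  rw [cardA] at hsum
  have hpred := theta_mul_pred q (n - d) (by omega)
  have hqpos : 0 < q - 1 := by omega
  rw [← hpred] at hsum
  have hfin := Nat.eq_of_mul_eq_mul_right hqpos hsum.symm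
  convert hfin using 2
  ext x
  rw [hHs]
  simp

end Aux

open scoped Classical in
theorem mt_upper_bound {F : Type*} [Field F] [Fintype F]
    (q n k t r : ℕ) (hq : Fintype.card F = q)
    (hk : 2 ≤ k) (hr1 : 1 ≤ r) (hr2 : r < t) (hn : n = k * t + r)
    (P : Finset (Submodule F (Fin n → F))) (hP : IsSubspacePartition P)
    (hmax : ∀ W ∈ P, finrank F ↥W ≤ t)
    (hhyp : ∀ H : Submodule F (Fin n → F), finrank F ↥H = n - 1 →
      (P.filter (fun (W : Submodule F (Fin n → F)) =>
        finrank F ↥W = t ∧ W ≤ H)).card ≤ ell q k t r) :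
    (P.filter (fun (W : Submodule F (Fin n → F)) => finrank F ↥W = t)).card
      ≤ ell q k t r * q ^ t := by
  haveI : Finite (Submodule F (Fin n → F)) :=
    Finite.of_injective (fun U => (U : Set (Fin n → F))) SetLike.coe_injective
  haveI : Fintype (Submodule F (Fin n → F)) := Fintype.ofFinite _
  have hq2 : 2 ≤ q := hq ▸ Fintype.one_lt_card
  have hnr : finrank F (Fin n → F) = n := Module.finrank_fin_fun F
  have h2t : 2 * t ≤ k * t := Nat.mul_le_mul_right t hk
  have hkt : (k - 1) * t = k * t - t := by rw [Nat.sub_mul, one_mul]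
  have hn1 : 1 ≤ n := by omega
  have htn : t < n := by omega
  set T := P.filter (fun W : Submodule F (Fin n → F) => finrank F ↥W = t) with hT
  set Hs := Finset.univ.filter
    (fun H : Submodule F (Fin n → F) => finrank F ↥H = n - 1) with hHs
  -- counting hyperplanes through each member of T
  have hWcount : ∀ W ∈ T, (Hs.filter (fun H => W ≤ H)).card = theta q (n - t) := by
    intro W hW
    rw [hT, Finset.mem_filter] at hW
    have hc := card_hyperplanes_containing q hq (by omega) W
    rw [hnr, hW.2] at hc
    rw [← hc]
    refine congrArg Finset.card ?_
    ext H
    rw [hHs]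
    simp only [Finset.mem_filter, Finset.mem_univ, true_and, and_assoc]
  -- counting all hyperplanes
  have hHcount : Hs.card = theta q n := by
    have hc := card_hyperplanes_containing q hq (by omega)
      (⊥ : Submodule F (Fin n → F))
    rw [hnr, finrank_bot, Nat.sub_zero] at hc
    rw [← hc]
    refine congrArg Finset.card ?_
    ext H
    rw [hHs]
    simp only [Finset.mem_filter, Finset.mem_univ, true_and, bot_le, and_true]
  -- double counting
  have key : T.card * theta q (n - t) ≤ theta q n * ell q k t r := by
    calc T.card * theta q (n - t)
        = ∑ W ∈ T, (Hs.filter (fun H => W ≤ H)).card := by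
          rw [Finset.sum_congr rfl hWcount, Finset.sum_const, smul_eq_mul]
      _ = ∑ W ∈ T, ∑ H ∈ Hs, if W ≤ H then 1 else 0 := by
          refine Finset.sum_congr rfl fun W _ => ?_
          rw [Finset.card_filter]
      _ = ∑ H ∈ Hs, ∑ W ∈ T, if W ≤ H then 1 else 0 := Finset.sum_comm
      _ = ∑ H ∈ Hs, (T.filter (fun W => W ≤ H)).card := by
          refine Finset.sum_congr rfl fun H _ => ?_
          rw [Finset.card_filter]
      _ ≤ ∑ H ∈ Hs, ell q k t r := by
          refine Finset.sum_le_sum fun H hH => ?_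
          rw [hHs, Finset.mem_filter] at hH
          refine le_trans (Finset.card_le_card ?_) (hhyp H hH.2)
          intro W hW
          rw [hT, Finset.filter_filter] at hW
          rw [Finset.mem_filter] at hW ⊢
          tauto
      _ = theta q n * ell q k t r := by
          rw [Finset.sum_const, hHcount, smul_eq_mul]
  -- arithmetic conclusion
  have hth : theta q n = theta q t + q ^ t * theta q (n - t) := by
    have h := theta_add q t (n - t)
    rw [Nat.add_sub_cancel' (le_of_lt htn)] at h
    exact h
  have hlt : ell q k t r * theta q t < theta q (n - t) := by
    have h1 : ell q k t r * theta q t = q ^ r * theta q ((k - 1) * t) := by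
      rw [ell, mul_assoc, sum_mul_theta]
    have h2 : theta q (n - t) = theta q r + q ^ r * theta q ((k - 1) * t) := by
      have h := theta_add q r ((k - 1) * t)
      have hnt : n - t = r + (k - 1) * t := by omega
      rw [← hnt] at h
      exact h
    have h3 : 0 < theta q r := theta_pos q r (by omega) hr1
    omega
  have hpos : 0 < theta q (n - t) := theta_pos q (n - t) (by omega) (by omega)
  rw [hth] at key
  by_contra hcon
  push_neg at hcon
  have hcon' : ell q k t r * q ^ t + 1 ≤ T.card := hcon
  nlinarith [key, hlt, hpos]
end
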